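/- arXiv:2111.05697 — 2 statements merged into one kernel-verified Lean document; each statement's English description precedes it below -/
import Mathlib

section
/- Let H and K be nontrivial finite groups with R(H) = R(K) = 1. If the soluble graphs of H and of K both have diameter exactly 2, then the soluble graph of H × K has diameter exactly 2. -/
def solubleGraph (G : Type*) [Group G] (R : Subgroup G) :
    SimpleGraph {x : G // x ∉ R} :=
  SimpleGraph.fromRel (fun x y => IsSolvable (Subgroup.closure ({x.1, y.1} : Set G)))

section aux

open Subgroup

lemma sol_of_le {G : Type*} [Group G] {A B : Subgroup G} (h : A ≤ B) (hB : IsSolvable B) :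
    IsSolvable A := by
  haveI : Group.IsSolvable B := hB
  exact solvable_of_solvable_injective (Subgroup.inclusion_injective h)

lemma sol_singleton {G : Type*} [Group G] (a : G) :
    IsSolvable (Subgroup.closure ({a} : Set G)) := by
  rw [← Subgroup.zpowers_eq_closure]
  have : ∀ x y : Subgroup.zpowers a, x * y = y * x := by
    rintro ⟨x, m, rfl⟩ ⟨y, n, rfl⟩
    ext
    simp only [Subgroup.coe_mul]
    exact (zpow_add a m n) ▸ ((zpow_add a n m).symm ▸ (congrArg (a ^ ·) (add_comm m n)))
  exact isSolvable_of_comm this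

lemma sol_pair_one_left {G : Type*} [Group G] (a : G) :
    IsSolvable (Subgroup.closure ({1, a} : Set G)) := by
  apply sol_of_le (B := Subgroup.closure {a}) _ (sol_singleton a)
  rw [Subgroup.closure_le]
  rintro x (rfl | rfl)
  · exact Subgroup.one_mem _
  · exact Subgroup.subset_closure rfl

lemma sol_pair_comm {G : Type*} [Group G] (a b : G) :
    Subgroup.closure ({a, b} : Set G) = Subgroup.closure ({b, a} : Set G) := by
  rw [Set.pair_comm]

-- adjacency in the soluble graph
lemma adj_iff {G : Type*} [Group G] {x y : {z : G // z ∉ (⊥ : Subgroup G)}} :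
    (solubleGraph G ⊥).Adj x y ↔ x ≠ y ∧ IsSolvable (Subgroup.closure ({x.1, y.1} : Set G)) := by
  constructor
  · rintro ⟨hne, h | h⟩
    · exact ⟨hne, h⟩
    · exact ⟨hne, sol_pair_comm x.1 y.1 ▸ h⟩
  · rintro ⟨hne, h⟩
    exact ⟨hne, Or.inl h⟩

/-- Key middle-vertex lemma. -/
lemma key {G : Type*} [Group G] [Nontrivial G]
    (hd : (solubleGraph G ⊥).ediam = 2) (a b : G) :
    ∃ c : G, c ≠ 1 ∧ IsSolvable (Subgroup.closure ({a, c} : Set G)) ∧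
      IsSolvable (Subgroup.closure ({c, b} : Set G)) := by
  by_cases ha : a = 1
  · subst ha
    by_cases hb : b = 1
    · subst hb
      obtain ⟨c, hc⟩ := exists_ne (1 : G)
      exact ⟨c, hc, sol_pair_one_left c, sol_pair_comm c 1 ▸ sol_pair_one_left c⟩
    · refine ⟨b, hb, sol_pair_one_left b, ?_⟩
      have : ({b, b} : Set G) = {b} := by simp
      rw [this]; exact sol_singleton b
  · by_cases hb : b = 1
    · subst hb
      refine ⟨a, ha, ?_, sol_pair_comm a 1 ▸ sol_pair_one_left a⟩
      have : ({a, a} : Set G) = {a} := by simp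
      rw [this]; exact sol_singleton a
    · by_cases hsol : IsSolvable (Subgroup.closure ({a, b} : Set G))
      · refine ⟨a, ha, ?_, hsol⟩
        have : ({a, a} : Set G) = {a} := by simp
        rw [this]; exact sol_singleton a
      · -- a, b distinct non-adjacent vertices; use diameter 2
        have hab : a ≠ b := by
          rintro rfl
          apply hsol
          have heq : ({a, a} : Set G) = {a} := by simp
          rw [heq]
          exact sol_singleton a
        set u : {z : G // z ∉ (⊥ : Subgroup G)} := ⟨a, by simp [ha]⟩
        set v : {z : G // z ∉ (⊥ : Subgroup G)} := ⟨b, by simp [hb]⟩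
        have hle : (solubleGraph G ⊥).edist u v ≤ 2 := hd ▸ SimpleGraph.edist_le_ediam
        have hne : u ≠ v := by simp [u, v, hab]
        have hnadj : ¬ (solubleGraph G ⊥).Adj u v := fun h => hsol (adj_iff.mp h).2
        have hge : 1 < (solubleGraph G ⊥).edist u v :=
          lt_of_le_of_ne
            (ENat.one_le_iff_ne_zero.mpr (SimpleGraph.edist_eq_zero_iff.ne.mpr hne))
            (fun h' => hnadj (SimpleGraph.edist_eq_one_iff_adj.mp h'.symm))
        have hge2 : 2 ≤ (solubleGraph G ⊥).edist u v := by
          have := Order.add_one_le_of_lt hge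
          rwa [one_add_one_eq_two] at this
        have h2 : (solubleGraph G ⊥).edist u v = 2 := le_antisymm hle hge2
        obtain ⟨p, hp⟩ := SimpleGraph.exists_walk_of_edist_eq_coe (k := 2) h2
        set w := p.getVert 1 with hw
        have ha1 : (solubleGraph G ⊥).Adj u w := by
          have := p.adj_getVert_succ (i := 0) (by omega)
          rwa [SimpleGraph.Walk.getVert_zero] at this
        have ha2 : (solubleGraph G ⊥).Adj w v := by
          have := p.adj_getVert_succ (i := 1) (by omega)
          have hv : p.getVert 2 = v := by
            conv_lhs => rw [show (2 : ℕ) = p.length by omega]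
            exact p.getVert_length
          rwa [hv] at this
        exact ⟨w.1, by simpa [Subgroup.mem_bot] using w.2, (adj_iff.mp ha1).2,
          (adj_iff.mp ha2).2⟩

lemma sol_pair_prod {H K : Type*} [Group H] [Group K] {h1 h2 : H} {k1 k2 : K}
    (s1 : IsSolvable (Subgroup.closure ({h1, h2} : Set H)))
    (s2 : IsSolvable (Subgroup.closure ({k1, k2} : Set K))) :
    IsSolvable (Subgroup.closure ({(h1, k1), (h2, k2)} : Set (H × K))) := by
  haveI : Group.IsSolvable (Subgroup.closure ({h1, h2} : Set H)) := s1; haveI : Group.IsSolvable (Subgroup.closure ({k1, k2} : Set K)) := s2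
  haveI : IsSolvable ((Subgroup.closure ({h1, h2} : Set H)).prod
      (Subgroup.closure ({k1, k2} : Set K))) :=
    solvable_of_solvable_injective (f := (Subgroup.prodEquiv _ _).toMonoidHom)
      (by rw [MulEquiv.coe_toMonoidHom]; exact (Subgroup.prodEquiv _ _).injective)
  apply sol_of_le _ this
  rw [Subgroup.closure_le]
  rintro x (rfl | rfl) <;>
    exact ⟨Subgroup.subset_closure (by simp), Subgroup.subset_closure (by simp)⟩

lemma sol_fst {H K : Type*} [Group H] [Group K] {h1 h2 : H}
    (s : IsSolvable (Subgroup.closure ({(h1, (1:K)), (h2, (1:K))} : Set (H × K)))) :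
    IsSolvable (Subgroup.closure ({h1, h2} : Set H)) := by
  haveI : Group.IsSolvable (Subgroup.closure ({(h1, (1:K)), (h2, (1:K))} : Set (H × K))) := s
  have hmap : (Subgroup.closure ({(h1, (1:K)), (h2, (1:K))} : Set (H × K))).map
      (MonoidHom.fst H K) = Subgroup.closure ({h1, h2} : Set H) := by
    rw [MonoidHom.map_closure]
    congr 1
    simp [Set.image_insert_eq]
  have := solvable_of_surjective
    (MonoidHom.subgroupMap_surjective (MonoidHom.fst H K)
      (Subgroup.closure ({(h1, (1:K)), (h2, (1:K))} : Set (H × K))))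
  rwa [hmap] at this

end aux

theorem stmt3 {H K : Type*} [Group H] [Group K] [Finite H] [Finite K]
    [Nontrivial H] [Nontrivial K]
    (hH : ∀ N : Subgroup H, N.Normal → IsSolvable N → N = ⊥)
    (hK : ∀ N : Subgroup K, N.Normal → IsSolvable N → N = ⊥)
    (hdH : (solubleGraph H ⊥).ediam = 2) (hdK : (solubleGraph K ⊥).ediam = 2) :
    (solubleGraph (H × K) ⊥).ediam = 2 := by
  apply le_antisymm
  · -- upper bound
    rw [SimpleGraph.ediam_le_iff]
    intro x y
    by_cases hxy : x = y
    · subst hxy; simp [SimpleGraph.edist_self]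
    obtain ⟨h, hh, sh1, sh2⟩ := key hdH x.1.1 y.1.1
    obtain ⟨k, hk, sk1, sk2⟩ := key hdK x.1.2 y.1.2
    have s1 : IsSolvable (Subgroup.closure ({x.1, (h, k)} : Set (H × K))) := by
      have := sol_pair_prod sh1 sk1
      simpa using this
    have s2 : IsSolvable (Subgroup.closure ({(h, k), y.1} : Set (H × K))) := by
      have := sol_pair_prod sh2 sk2
      simpa using this
    by_cases hzx : (h, k) = x.1
    · have : IsSolvable (Subgroup.closure ({x.1, y.1} : Set (H × K))) := hzx ▸ s2
      have hadj : (solubleGraph (H × K) ⊥).Adj x y := adj_iff.mpr ⟨hxy, this⟩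
      calc (solubleGraph (H × K) ⊥).edist x y ≤ 1 :=
            le_of_eq (SimpleGraph.edist_eq_one_iff_adj.mpr hadj)
        _ ≤ 2 := by norm_num
    by_cases hzy : (h, k) = y.1
    · have : IsSolvable (Subgroup.closure ({x.1, y.1} : Set (H × K))) := hzy ▸ s1
      have hadj : (solubleGraph (H × K) ⊥).Adj x y := adj_iff.mpr ⟨hxy, this⟩
      calc (solubleGraph (H × K) ⊥).edist x y ≤ 1 :=
            le_of_eq (SimpleGraph.edist_eq_one_iff_adj.mpr hadj)
        _ ≤ 2 := by norm_num
    · set z : {w : H × K // w ∉ (⊥ : Subgroup (H × K))} :=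
        ⟨(h, k), by simp [Subgroup.mem_bot, Prod.ext_iff, hh]⟩
      have hadj1 : (solubleGraph (H × K) ⊥).Adj x z :=
        adj_iff.mpr ⟨fun h' => hzx (by rw [h']), s1⟩
      have hadj2 : (solubleGraph (H × K) ⊥).Adj z y :=
        adj_iff.mpr ⟨fun h' => hzy (congrArg Subtype.val h'), s2⟩
      calc (solubleGraph (H × K) ⊥).edist x y
          ≤ (solubleGraph (H × K) ⊥).edist x z + (solubleGraph (H × K) ⊥).edist z y :=
            SimpleGraph.edist_triangle
        _ ≤ 1 + 1 := add_le_add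
            (le_of_eq (SimpleGraph.edist_eq_one_iff_adj.mpr hadj1))
            (le_of_eq (SimpleGraph.edist_eq_one_iff_adj.mpr hadj2))
        _ = 2 := by norm_num
  · -- lower bound : find a non-adjacent pair coming from H
    have : ¬ (solubleGraph H ⊥).ediam ≤ 1 := by
      rw [hdH]; norm_num
    rw [SimpleGraph.ediam_le_iff] at this
    push_neg at this
    obtain ⟨u, v, huv⟩ := this
    have hne : u ≠ v := by
      rintro rfl
      simp [SimpleGraph.edist_self] at huv
    have hnadj : ¬ (solubleGraph H ⊥).Adj u v := by
      intro h
      exact absurd (le_of_eq (SimpleGraph.edist_eq_one_iff_adj.mpr h)) (not_le.mpr huv)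
    have hnsol : ¬ IsSolvable (Subgroup.closure ({u.1, v.1} : Set H)) := by
      intro h
      exact hnadj (adj_iff.mpr ⟨hne, h⟩)
    set x : {w : H × K // w ∉ (⊥ : Subgroup (H × K))} :=
      ⟨(u.1, 1), by
        simp only [Subgroup.mem_bot, Prod.ext_iff, not_and]
        intro h; exact absurd (Subgroup.mem_bot.mpr h) u.2⟩
    set y : {w : H × K // w ∉ (⊥ : Subgroup (H × K))} :=
      ⟨(v.1, 1), by
        simp only [Subgroup.mem_bot, Prod.ext_iff, not_and]
        intro h; exact absurd (Subgroup.mem_bot.mpr h) v.2⟩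
    have hxyne : x ≠ y := by
      simp only [x, y, ne_eq, Subtype.mk.injEq, Prod.mk.injEq]
      intro ⟨h, _⟩
      exact hne (Subtype.ext h)
    have hxynadj : ¬ (solubleGraph (H × K) ⊥).Adj x y := by
      intro hadj
      exact hnsol (sol_fst (adj_iff.mp hadj).2)
    have h1 : 1 < (solubleGraph (H × K) ⊥).edist x y :=
      lt_of_le_of_ne
        (ENat.one_le_iff_ne_zero.mpr (SimpleGraph.edist_eq_zero_iff.ne.mpr hxyne))
        (fun h' => hxynadj (SimpleGraph.edist_eq_one_iff_adj.mp h'.symm))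
    calc (2 : ℕ∞) ≤ (solubleGraph (H × K) ⊥).edist x y := by
          have := Order.add_one_le_of_lt h1
          rwa [one_add_one_eq_two] at this
      _ ≤ (solubleGraph (H × K) ⊥).ediam := SimpleGraph.edist_le_ediam
end

section
/- Let T be a non-abelian finite simple group and let G = T^k with k ≥ 2. If x = (x₁, …, x_k) and y = (y₁, …, y_k) are distinct nontrivial elements of G with x₁ = 1, then the distance between x and y in the soluble graph of G is at most 2. -/
lemma solvable_closure_of_commute {G : Type*} [Group G] {a b : G} (h : Commute a b) :
    IsSolvable (Subgroup.closure ({a, b} : Set G)) := by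
  have hcomm : ∀ p ∈ ({a, b} : Set G), ∀ q ∈ ({a, b} : Set G), p * q = q * p := by
    rintro p (rfl | rfl) q (rfl | rfl)
    · rfl
    · exact h
    · exact h.symm
    · rfl
  letI := Subgroup.closureCommGroupOfComm hcomm
  exact Group.isSolvable_of_comm (fun p q => mul_comm p q)

lemma sol_adj {G : Type*} [Group G] {a b : G} (ha : a ≠ 1) (hb : b ≠ 1) (hne : a ≠ b)
    (h : Commute a b) :
    (solubleGraph G ⊥).Adj ⟨a, by simpa using ha⟩ ⟨b, by simpa using hb⟩ := by
  refine ⟨by simpa using hne, Or.inl (solvable_closure_of_commute h)⟩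

theorem stmt8 {T : Type*} [Group T] [Finite T] [IsSimpleGroup T]
    (hnab : ¬ ∀ a b : T, a * b = b * a)
    (k : ℕ) (hk : 2 ≤ k) (x y : Fin k → T)
    (hx : x ≠ 1) (hy : y ≠ 1) (hxy : x ≠ y) (hx1 : x ⟨0, by omega⟩ = 1) :
    ∃ w : (solubleGraph (Fin k → T) ⊥).Walk ⟨x, by simpa using hx⟩ ⟨y, by simpa using hy⟩,
      w.length ≤ 2 := by
  classical
  push_neg at hnab
  obtain ⟨a, b, hab⟩ := hnab
  have ha1 : a ≠ 1 := by rintro rfl; simp at hab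
  set i0 : Fin k := ⟨0, by omega⟩ with hi0
  by_cases hc : Commute x y
  · exact ⟨SimpleGraph.Walk.cons (sol_adj hx hy hxy hc) SimpleGraph.Walk.nil, by simp⟩
  · set c : T := if y i0 = 1 then a else y i0 with hcdef
    have hc1 : c ≠ 1 := by
      by_cases h : y i0 = 1 <;> simp [hcdef, h, ha1]
    set z : Fin k → T := Pi.mulSingle i0 c with hz
    have hz1 : z ≠ 1 := by
      intro h
      have := congrFun h i0
      simp [hz] at this
      exact hc1 this
    have hzi : z i0 = c := by simp [hz]
    have hxz : Commute x z := by
      funext i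
      by_cases h : i = i0
      · subst h; simp [Pi.mul_apply, hx1, hi0.symm ▸ hx1]
      · simp [Pi.mul_apply, hz, Pi.mulSingle_eq_of_ne h]
    have hzy : Commute z y := by
      funext i
      by_cases h : i = i0
      · subst h
        simp only [Pi.mul_apply, hzi]
        by_cases h2 : y i0 = 1 <;> simp [hcdef, h2]
      · simp [Pi.mul_apply, hz, Pi.mulSingle_eq_of_ne h]
    have hzx : x ≠ z := by
      intro h
      apply hc1
      rw [← hzi, ← h, hx1]
    have hzy' : z ≠ y := by
      intro h
      exact hc (h ▸ hxz)
    exact ⟨SimpleGraph.Walk.cons (sol_adj hx hz1 hzx hxz)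
      (SimpleGraph.Walk.cons (sol_adj hz1 hy hzy' hzy) SimpleGraph.Walk.nil), by simp⟩
end
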